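/- Let f : ℝⁿ × ℝ^p → ℝⁿ, let 𝒮_u ⊆ ℝ^p, 𝒮 ⊆ ℝⁿ, I ⊆ 𝒮, and τ_c, τ_r > 0. Assume that for every x ∈ I there exist u ∈ 𝒮_u and a function ξ : ℝ → ℝⁿ with ξ(0) = x, ξ'(t) = f(ξ(t), u) for all t ∈ [0, τ_c + τ_r], ξ(τ_c) ∈ I, ξ(τ_c + τ_r) ∈ I, and ξ(t) ∈ 𝒮 for all t ∈ [0, τ_c + τ_r]. Then for every x₀ ∈ I and every restart pattern δ : ℕ → Bool there exist a function ζ : ℝ → ℝⁿ, inputs u : ℕ → 𝒮_u, and switching times t : ℕ → ℝ with t(0) = 0 and t(k+1) = t(k) + (τ_c + τ_r) if δ(k) is true, t(k+1) = t(k) + τ_c otherwise, such that ζ(0) = x₀, on each interval [t(k), t(k+1)] the function ζ satisfies ζ'(s) = f(ζ(s), u(k)) (derivative within the interval), ζ(t(k)) ∈ I for all k, and ζ(s) ∈ 𝒮 for all s ≥ 0. -/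

import Mathlib

/-- Safety of the base controller for a nonlinear system under arbitrary restart
patterns: if from every state of the invariant set `I ⊆ S` there are an admissible
constant input and a trajectory that is back in `I` after one control cycle `τ_c`, is in
`I` after a cycle plus a restart `τ_c + τ_r`, and stays in the safe set `S` throughout
`[0, τ_c + τ_r]`, then from any initial state in `I` and for any restart pattern `δ`
there is a closed-loop trajectory, with piecewise-constant admissible input updated at
the switching times, that visits `I` at every switching time and remains in `S` for all
time. -/
theorem base_controller_safe_under_restarts
    {n p : ℕ}
    (f : (Fin n → ℝ) × (Fin p → ℝ) → (Fin n → ℝ))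
    (Su : Set (Fin p → ℝ)) (S : Set (Fin n → ℝ)) (I : Set (Fin n → ℝ))
    (hIS : I ⊆ S)
    (τc τr : ℝ) (hτc : 0 < τc) (hτr : 0 < τr)
    (hBC : ∀ x ∈ I, ∃ u ∈ Su, ∃ ξ : ℝ → (Fin n → ℝ),
      ξ 0 = x ∧
      (∀ t ∈ Set.Icc (0 : ℝ) (τc + τr), HasDerivAt ξ (f (ξ t, u)) t) ∧
      ξ τc ∈ I ∧ ξ (τc + τr) ∈ I ∧
      (∀ t ∈ Set.Icc (0 : ℝ) (τc + τr), ξ t ∈ S))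
    (x₀ : Fin n → ℝ) (hx₀ : x₀ ∈ I) (δ : ℕ → Bool) :
    ∃ (ζ : ℝ → (Fin n → ℝ)) (u : ℕ → (Fin p → ℝ)) (t : ℕ → ℝ),
      t 0 = 0 ∧
      (∀ k, t (k + 1) = t k + if δ k then τc + τr else τc) ∧
      ζ 0 = x₀ ∧
      (∀ k, u k ∈ Su) ∧
      (∀ k, ∀ s ∈ Set.Icc (t k) (t (k + 1)),
        HasDerivWithinAt ζ (f (ζ s, u k)) (Set.Icc (t k) (t (k + 1))) s) ∧
      (∀ k, ζ (t k) ∈ I) ∧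
      (∀ s : ℝ, 0 ≤ s → ζ s ∈ S) := by
  classical
  choose uf hu ξ hξ0 hξd hξc hξcr hξS using hBC
  set L : ℕ → ℝ := fun k => if δ k then τc + τr else τc with hLdef
  have hLpos : ∀ k, 0 < L k := by
    intro k; simp only [hLdef]; split
    · linarith
    · exact hτc
  have hLle : ∀ k, L k ≤ τc + τr := by
    intro k; simp only [hLdef]; split <;> linarith
  have hLc : ∀ k, τc ≤ L k := by
    intro k; simp only [hLdef]; split <;> linarith
  -- states
  let X : ℕ → {x : Fin n → ℝ // x ∈ I} := fun k => Nat.rec ⟨x₀, hx₀⟩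
    (fun k px => ⟨ξ px.1 px.2 (L k), by
      simp only [hLdef]
      by_cases h : δ k = true
      · simp only [h, if_true]; exact hξcr px.1 px.2
      · simp only [h, if_false]; exact hξc px.1 px.2⟩) k
  -- trajectories
  let Ξ : ℕ → ℝ → (Fin n → ℝ) := fun k => ξ (X k).1 (X k).2
  have hXsucc : ∀ k, (X (k+1)).1 = Ξ k (L k) := fun k => rfl
  -- times
  let T : ℕ → ℝ := fun k => ∑ i ∈ Finset.range k, L i
  have hT0 : T 0 = 0 := Finset.sum_range_zero _
  have hTsucc : ∀ k, T (k+1) = T k + L k := fun k => Finset.sum_range_succ _ _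
  have hTmono : StrictMono T := strictMono_nat_of_lt_succ (fun k => by
    rw [hTsucc]; linarith [hLpos k])
  have hTlb : ∀ k : ℕ, (k : ℝ) * τc ≤ T k := by
    intro k
    induction k with
    | zero => simp [hT0]
    | succ k ih =>
      rw [hTsucc]; push_cast; nlinarith [hLc k]
  have ex : ∀ s : ℝ, ∃ k, s < T (k + 1) := by
    intro s
    obtain ⟨N, hN⟩ := exists_nat_gt (s / τc)
    refine ⟨N, lt_of_lt_of_le ?_ ((hTlb N).trans (hTmono.monotone (Nat.le_succ N)))⟩
    calc s = s / τc * τc := by field_simp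
    _ < N * τc := by exact mul_lt_mul_of_pos_right hN hτc
  -- trajectory
  let idx : ℝ → ℕ := fun s => Nat.find (ex s)
  let ζ : ℝ → (Fin n → ℝ) := fun s => Ξ (idx s) (s - T (idx s))
  have hidx1 : ∀ s, s < T (idx s + 1) := fun s => Nat.find_spec (ex s)
  have hidx2 : ∀ s, 0 ≤ s → T (idx s) ≤ s := by
    intro s hs
    rcases hc : idx s with _ | m
    · rw [hT0]; exact hs
    · have hm : m < idx s := hc ▸ m.lt_succ_self
      have := Nat.find_min (ex s) hm
      push_neg at this
      exact this
  -- key lemma: on [T k, T (k+1)], ζ agrees with shifted Ξ k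
  have key : ∀ k, ∀ s ∈ Set.Icc (T k) (T (k+1)), ζ s = Ξ k (s - T k) := by
    intro k s hs
    rcases lt_or_eq_of_le hs.2 with hlt | heq
    · have h1 : idx s ≤ k := Nat.find_le hlt
      have h2 : k ≤ idx s := by
        by_contra h
        push_neg at h
        have : T (idx s + 1) ≤ T k := hTmono.monotone (by omega)
        linarith [hidx1 s, hs.1]
      have : idx s = k := le_antisymm h1 h2
      simp only [ζ, this]
    · -- s = T (k+1); idx s = k+1
      have h1 : idx s ≤ k + 1 := Nat.find_le (by rw [heq]; exact hTmono (Nat.lt_succ_self _))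
      have h2 : k + 1 ≤ idx s := by
        by_contra h
        push_neg at h
        have : T (idx s + 1) ≤ T (k + 1) := hTmono.monotone (by omega)
        rw [← heq] at this
        linarith [hidx1 s]
      have hik : idx s = k + 1 := le_antisymm h1 h2
      have : ζ s = Ξ (k+1) 0 := by
        simp only [ζ, hik, ← heq, sub_self]
      rw [this]
      have e1 : Ξ (k+1) 0 = (X (k+1)).1 := hξ0 _ _
      rw [e1, hXsucc k, heq, hTsucc, add_sub_cancel_left]
  refine ⟨ζ, fun k => uf (X k).1 (X k).2, T, hT0, hTsucc, ?_, fun k => hu _ _, ?_, ?_, ?_⟩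
  · -- ζ 0 = x₀
    have h0 : (0:ℝ) ∈ Set.Icc (T 0) (T 1) := by
      constructor
      · rw [hT0]
      · rw [hT0] at *; exact le_of_lt (hTmono Nat.zero_lt_one)
    rw [key 0 0 h0, hT0, sub_zero]
    exact hξ0 _ _
  · -- derivative
    intro k s hs
    have hsub : s - T k ∈ Set.Icc (0:ℝ) (τc + τr) := by
      constructor
      · linarith [hs.1]
      · have := hs.2
        rw [hTsucc] at this
        linarith [hLle k]
    have hd : HasDerivAt (fun r => Ξ k (r - T k)) (f (Ξ k (s - T k), uf (X k).1 (X k).2)) s := by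
      have h1 : HasDerivAt (fun r : ℝ => r - T k) 1 s := (hasDerivAt_id s).sub_const _
      have h2 := hξd (X k).1 (X k).2 (s - T k) hsub
      have := HasDerivAt.scomp (𝕜 := ℝ) s h2 h1
      simp only [one_smul] at this; exact this
    have hζs : ζ s = Ξ k (s - T k) := key k s hs
    rw [hζs]
    exact (hd.hasDerivWithinAt).congr (fun y hy => key k y hy) hζs
  · -- ζ (T k) ∈ I
    intro k
    have hk : T k ∈ Set.Icc (T k) (T (k+1)) := ⟨le_refl _, le_of_lt (hTmono (Nat.lt_succ_self k))⟩
    rw [key k (T k) hk, sub_self]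
    have : Ξ k 0 = (X k).1 := hξ0 _ _
    rw [this]; exact (X k).2
  · -- safety
    intro s hs
    have h1 := hidx2 s hs
    have h2 := hidx1 s
    rw [hTsucc] at h2
    have hsub : s - T (idx s) ∈ Set.Icc (0:ℝ) (τc + τr) := by
      constructor
      · linarith
      · linarith [hLle (idx s)]
    exact hξS _ _ _ hsub
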